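/- Nuclear norm subgradient inequality with certificate: Let Y* ∈ ℝ^{n×n} be symmetric positive semidefinite, let C be the orthogonal projection matrix onto the column space of Y*, and let W ∈ ℝ^{n×n} satisfy ‖W‖ ≤ 1 (spectral norm) and P_T(W) := CW + WC − CWC = 0. Then for every Y ∈ ℝ^{n×n}, ‖Y‖_* − ‖Y*‖_* ≥ ⟨C + W, Y − Y*⟩, where ⟨M, N⟩ = Σ_{i,j} m_{ij} n_{ij} is the Frobenius (trace) inner product. -/

import Mathlib

/-- Nuclear norm: trace of the positive semidefinite square root of `Yᵀ Y`
(equivalently, the sum of the singular values of `Y`). -/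
noncomputable def nuclearNorm {n : ℕ} (Y : Matrix (Fin n) (Fin n) ℝ) : ℝ :=
  ((Matrix.posSemidef_conjTranspose_mul_self Y).isHermitian.eigenvectorUnitary.1 *
    Matrix.diagonal (Real.sqrt ∘
      (Matrix.posSemidef_conjTranspose_mul_self Y).isHermitian.eigenvalues) *
    (star (Matrix.posSemidef_conjTranspose_mul_self Y).isHermitian.eigenvectorUnitary :
      Matrix (Fin n) (Fin n) ℝ)).trace

/-- Spectral norm (largest singular value), as operator norm on Euclidean space. -/
noncomputable def specNorm {n : ℕ} (W : Matrix (Fin n) (Fin n) ℝ) : ℝ :=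
  ‖LinearMap.toContinuousLinearMap (Matrix.toEuclideanLin W)‖

namespace NucAux

open Matrix Finset

variable {n : ℕ}

noncomputable def toE (v : Fin n → ℝ) : EuclideanSpace ℝ (Fin n) :=
  (WithLp.equiv 2 (Fin n → ℝ)).symm v

lemma inner_toE (v w : Fin n → ℝ) : (inner ℝ (toE v) (toE w) : ℝ) = v ⬝ᵥ w := by
  simp [toE, PiLp.inner_apply, RCLike.inner_apply, dotProduct, mul_comm]

lemma norm_toE_sq (v : Fin n → ℝ) : ‖toE v‖ ^ 2 = v ⬝ᵥ v := by
  rw [← real_inner_self_eq_norm_sq, inner_toE]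

lemma norm_toE (v : Fin n → ℝ) : ‖toE v‖ = Real.sqrt (v ⬝ᵥ v) := by
  rw [← norm_toE_sq, Real.sqrt_sq (norm_nonneg _)]

lemma specNorm_nonneg (A : Matrix (Fin n) (Fin n) ℝ) : 0 ≤ specNorm A := norm_nonneg _

lemma norm_mulVec_le (A : Matrix (Fin n) (Fin n) ℝ) (v : Fin n → ℝ) :
    ‖toE (A *ᵥ v)‖ ≤ specNorm A * ‖toE v‖ := by
  exact (LinearMap.toContinuousLinearMap (Matrix.toEuclideanLin A)).le_opNorm (toE v)

lemma dot_sq_le (A : Matrix (Fin n) (Fin n) ℝ) (v : Fin n → ℝ) :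
    (A *ᵥ v) ⬝ᵥ (A *ᵥ v) ≤ specNorm A ^ 2 * (v ⬝ᵥ v) := by
  have h := pow_le_pow_left₀ (norm_nonneg _) (norm_mulVec_le A v) 2
  rw [norm_toE_sq, mul_pow, norm_toE_sq] at h
  exact h

lemma dot_le_sqrt (v w : Fin n → ℝ) :
    v ⬝ᵥ w ≤ Real.sqrt (v ⬝ᵥ v) * Real.sqrt (w ⬝ᵥ w) := by
  have h := real_inner_le_norm (toE v) (toE w)
  rwa [inner_toE, norm_toE, norm_toE] at h

lemma dot_mulVec_left (M : Matrix (Fin n) (Fin n) ℝ) (v w : Fin n → ℝ) :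
    (M *ᵥ v) ⬝ᵥ w = v ⬝ᵥ (Mᵀ *ᵥ w) := by
  rw [dotProduct_comm, Matrix.dotProduct_mulVec, ← Matrix.mulVec_transpose,
    dotProduct_comm]

lemma entry_diag (U M : Matrix (Fin n) (Fin n) ℝ) (i : Fin n) :
    (star U * M * U) i i = (fun k => U k i) ⬝ᵥ (M *ᵥ fun k => U k i) := by
  simp only [Matrix.mul_apply, Matrix.star_apply, star_trivial, Matrix.mulVec,
    dotProduct, Finset.sum_mul, Finset.mul_sum]
  rw [Finset.sum_comm]
  exact Finset.sum_congr rfl fun k _ => Finset.sum_congr rfl fun l _ => by ring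

lemma nuclearNorm_eq (Y : Matrix (Fin n) (Fin n) ℝ) :
    nuclearNorm Y =
      ∑ i, Real.sqrt ((Matrix.posSemidef_conjTranspose_mul_self Y).1.eigenvalues i) := by
  classical
  unfold nuclearNorm
  rw [Matrix.trace_mul_cycle]
  have hst : (star ((Matrix.posSemidef_conjTranspose_mul_self Y).1.eigenvectorUnitary :
        Matrix (Fin n) (Fin n) ℝ)) *
      ((Matrix.posSemidef_conjTranspose_mul_self Y).1.eigenvectorUnitary :
        Matrix (Fin n) (Fin n) ℝ) = 1 :=
    Matrix.UnitaryGroup.star_mul_self _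
  rw [hst, Matrix.one_mul, Matrix.trace_diagonal]
  simp

lemma nuclearNorm_nonneg (Y : Matrix (Fin n) (Fin n) ℝ) : 0 ≤ nuclearNorm Y := by
  rw [nuclearNorm_eq]
  exact Finset.sum_nonneg fun i _ => Real.sqrt_nonneg _

lemma trace_le (A Y : Matrix (Fin n) (Fin n) ℝ) :
    (Aᵀ * Y).trace ≤ specNorm A * nuclearNorm Y := by
  classical
  set hH := Matrix.posSemidef_conjTranspose_mul_self Y with hHdef
  set U : Matrix (Fin n) (Fin n) ℝ := (hH.1.eigenvectorUnitary : Matrix (Fin n) (Fin n) ℝ) with hUdef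
  have hUU : star U * U = 1 := Matrix.UnitaryGroup.star_mul_self _
  have hUU' : U * star U = 1 := Matrix.mem_unitaryGroup_iff.mp hH.1.eigenvectorUnitary.2
  have hdiag : star U * (Yᴴ * Y) * U = Matrix.diagonal (RCLike.ofReal ∘ hH.1.eigenvalues) :=
    by
      have hs := Matrix.IsHermitian.spectral_theorem hH.1
      rw [Unitary.conjStarAlgAut_apply] at hs
      conv_lhs => rw [hs]
      simp only [hUdef, Unitary.coe_star, ← Matrix.mul_assoc, Matrix.UnitaryGroup.star_mul_self,
        Matrix.one_mul]
      rw [Matrix.mul_assoc, Matrix.UnitaryGroup.star_mul_self, Matrix.mul_one]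
  have key : (Aᵀ * Y).trace = ∑ i, (star U * (Aᵀ * Y) * U) i i := by
    have h2 : (star U * (Aᵀ * Y) * U).trace = (Aᵀ * Y).trace := by
      rw [Matrix.trace_mul_cycle, ← Matrix.mul_assoc, hUU', Matrix.one_mul]
    rw [← h2]
    simp [Matrix.trace, Matrix.diag]
  rw [key]
  have hbound : ∀ i, (star U * (Aᵀ * Y) * U) i i
      ≤ specNorm A * Real.sqrt (hH.1.eigenvalues i) := by
    intro i
    set u : Fin n → ℝ := fun k => U k i with hu
    have hunit : u ⬝ᵥ u = 1 := by
      have h := congrFun (congrFun hUU i) i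
      simpa [Matrix.mul_apply, Matrix.star_apply, dotProduct, Matrix.one_apply, u]
        using h
    have heig : u ⬝ᵥ ((Yᵀ * Y) *ᵥ u) = hH.1.eigenvalues i := by
      have h1 := entry_diag U (Yᴴ * Y) i
      rw [hdiag] at h1
      rw [← hu] at h1
      rw [← Matrix.conjTranspose_eq_transpose_of_trivial, ← h1]
      simp
    rw [entry_diag, ← hu]
    have hstep : u ⬝ᵥ ((Aᵀ * Y) *ᵥ u) = (A *ᵥ u) ⬝ᵥ (Y *ᵥ u) := by
      rw [← Matrix.mulVec_mulVec, Matrix.dotProduct_mulVec, Matrix.vecMul_transpose]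
    rw [hstep]
    have hY : (Y *ᵥ u) ⬝ᵥ (Y *ᵥ u) = hH.1.eigenvalues i := by
      rw [dot_mulVec_left, Matrix.mulVec_mulVec, heig]
    calc (A *ᵥ u) ⬝ᵥ (Y *ᵥ u)
        ≤ Real.sqrt ((A *ᵥ u) ⬝ᵥ (A *ᵥ u)) * Real.sqrt ((Y *ᵥ u) ⬝ᵥ (Y *ᵥ u)) :=
          dot_le_sqrt _ _
      _ ≤ specNorm A * Real.sqrt (hH.1.eigenvalues i) := by
          rw [hY]
          apply mul_le_mul_of_nonneg_right _ (Real.sqrt_nonneg _)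
          have h1 : (A *ᵥ u) ⬝ᵥ (A *ᵥ u) ≤ specNorm A ^ 2 := by
            have h2 := dot_sq_le A u
            rwa [hunit, mul_one] at h2
          calc Real.sqrt ((A *ᵥ u) ⬝ᵥ (A *ᵥ u)) ≤ Real.sqrt (specNorm A ^ 2) :=
                Real.sqrt_le_sqrt h1
            _ = specNorm A := Real.sqrt_sq (specNorm_nonneg A)
  calc ∑ i, (star U * (Aᵀ * Y) * U) i i
      ≤ ∑ i, specNorm A * Real.sqrt (hH.1.eigenvalues i) :=
        Finset.sum_le_sum fun i _ => hbound i
    _ = specNorm A * nuclearNorm Y := by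
        rw [← Finset.mul_sum, nuclearNorm_eq, ← hHdef]

lemma frob_eq_trace (A B : Matrix (Fin n) (Fin n) ℝ) :
    ∑ i, ∑ j, A i j * B i j = (Aᵀ * B).trace := by
  rw [Matrix.trace]
  simp only [Matrix.diag_apply, Matrix.mul_apply, Matrix.transpose_apply]
  rw [Finset.sum_comm]

end NucAux

open Matrix NucAux in
/-- **Nuclear norm subgradient inequality with certificate.** If `C` is the orthogonal
projection onto the column space of the PSD matrix `Y*` (symmetric idempotent with the same
range) and `‖W‖ ≤ 1` with `P_T(W) = CW + WC − CWC = 0`, then for every `Y`,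
`‖Y‖_* − ‖Y*‖_* ≥ ⟨C + W, Y − Y*⟩`. -/
theorem nuclear_norm_subgradient {n : ℕ}
    (Ystar C W : Matrix (Fin n) (Fin n) ℝ)
    (hpsd : Ystar.PosSemidef)
    (hCsymm : C.IsSymm) (hCidem : C * C = C)
    (hCrange : LinearMap.range C.mulVecLin = LinearMap.range Ystar.mulVecLin)
    (hW : specNorm W ≤ 1)
    (hWT : C * W + W * C - C * W * C = 0) :
    ∀ Y : Matrix (Fin n) (Fin n) ℝ,
      nuclearNorm Y - nuclearNorm Ystar ≥
        ∑ i, ∑ j, (C + W) i j * (Y - Ystar) i j := by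
  classical
  have hCW : C * W = 0 := by
    have h := congrArg (fun M => C * M) hWT
    simpa [mul_add, mul_sub, ← mul_assoc, hCidem] using h
  have hWC : W * C = 0 := by
    have h := congrArg (fun M => M * C) hWT
    simpa [add_mul, sub_mul, mul_assoc, hCidem] using h
  have hfix : ∀ x ∈ LinearMap.range Ystar.mulVecLin, C *ᵥ x = x := by
    intro x hx
    rw [← hCrange] at hx
    obtain ⟨y, rfl⟩ := hx
    simp only [Matrix.mulVecLin_apply, Matrix.mulVec_mulVec, hCidem]
  have hCY : C * Ystar = Ystar := by
    ext i j
    have h := congrFun (hfix (Ystar *ᵥ Pi.single j 1)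
      ⟨Pi.single j 1, by simp [Matrix.mulVecLin_apply]⟩) i
    rw [Matrix.mulVec_mulVec] at h
    simpa [Matrix.mulVec_single] using h
  have hsq : Ystar ^ 2 = Ystarᴴ * Ystar := by rw [pow_two, hpsd.1.eq]
  have hnuc : nuclearNorm Ystar = Ystar.trace := by
    unfold nuclearNorm
    have hA := (Matrix.posSemidef_conjTranspose_mul_self Ystar).isHermitian
    have e1 : ((Matrix.posSemidef_conjTranspose_mul_self Ystar).isHermitian.eigenvectorUnitary.1 *
        Matrix.diagonal (Real.sqrt ∘
          (Matrix.posSemidef_conjTranspose_mul_self Ystar).isHermitian.eigenvalues) *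
        (star (Matrix.posSemidef_conjTranspose_mul_self Ystar).isHermitian.eigenvectorUnitary :
          Matrix (Fin n) (Fin n) ℝ)) = cfc Real.sqrt (Ystarᴴ * Ystar) := by
      rw [hA.cfc_eq, Matrix.IsHermitian.cfc, Unitary.conjStarAlgAut_apply, RCLike.ofReal_real_eq_id]
      rfl
    have hs : cfc Real.sqrt (Ystar ^ 2) = Ystar := by
      have hsa : IsSelfAdjoint Ystar := hpsd.1
      have hnn : ∀ x ∈ spectrum ℝ Ystar, 0 ≤ x := by
        intro x hx
        rw [hpsd.1.spectrum_real_eq_range_eigenvalues] at hx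
        obtain ⟨i, rfl⟩ := hx
        exact hpsd.eigenvalues_nonneg i
      rw [← cfc_pow_id (R := ℝ) Ystar 2 hsa, ← cfc_comp Real.sqrt (· ^ 2 : ℝ → ℝ) Ystar hsa]
      rw [cfc_congr (a := Ystar) (g := fun x : ℝ => x) (fun x hx => by
        simp [Real.sqrt_sq (hnn x hx)])]
      exact cfc_id' ℝ Ystar hsa
    rw [e1, ← hsq, hs]
  have hWtY : Wᵀ * Ystar = 0 := by
    have h0 : Wᵀ * C = 0 := by
      have h := congrArg Matrix.transpose hCW
      rwa [Matrix.transpose_mul, Matrix.transpose_zero, hCsymm.eq] at h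
    rw [← hCY, ← Matrix.mul_assoc, h0, Matrix.zero_mul]
  have heq : ((C + W)ᵀ * Ystar).trace = nuclearNorm Ystar := by
    rw [Matrix.transpose_add, Matrix.add_mul, Matrix.trace_add, hWtY, Matrix.trace_zero,
      add_zero, hCsymm.eq, hCY, hnuc]
  -- spectral norm of C + W is at most 1
  have hspec : specNorm (C + W) ≤ 1 := by
    apply ContinuousLinearMap.opNorm_le_bound _ zero_le_one
    intro x
    rw [one_mul]
    set v : Fin n → ℝ := (WithLp.equiv 2 (Fin n → ℝ)) x with hv
    have hx : x = toE v := rfl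
    have happ : (LinearMap.toContinuousLinearMap (Matrix.toEuclideanLin (C + W))) x
        = toE ((C + W) *ᵥ v) := rfl
    rw [happ, hx, norm_toE, norm_toE]
    apply Real.sqrt_le_sqrt
    set a : Fin n → ℝ := C *ᵥ v with ha
    set b : Fin n → ℝ := W *ᵥ v with hb
    have hab : (C + W) *ᵥ v = a + b := by rw [Matrix.add_mulVec]
    have h1 : a ⬝ᵥ b = 0 := by
      rw [ha, dot_mulVec_left, hCsymm.eq, hb, Matrix.mulVec_mulVec, hCW, Matrix.zero_mulVec,
        dotProduct_zero]
    have h2 : b ⬝ᵥ a = 0 := by rw [dotProduct_comm, h1]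
    have h3 : a ⬝ᵥ a = v ⬝ᵥ a := by
      rw [ha, dot_mulVec_left, hCsymm.eq, Matrix.mulVec_mulVec, hCidem]
    have h4 : b ⬝ᵥ b ≤ v ⬝ᵥ v - v ⬝ᵥ a := by
      have hWb : b = W *ᵥ (v - a) := by
        rw [Matrix.mulVec_sub, ha, Matrix.mulVec_mulVec, hWC, Matrix.zero_mulVec, sub_zero, hb]
      have hle : b ⬝ᵥ b ≤ specNorm W ^ 2 * ((v - a) ⬝ᵥ (v - a)) := by
        rw [hWb]; exact dot_sq_le W (v - a)
      have hnn : 0 ≤ (v - a) ⬝ᵥ (v - a) := by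
        rw [← norm_toE_sq]; positivity
      have hs2 : specNorm W ^ 2 ≤ 1 := by nlinarith [specNorm_nonneg W]
      have hle2 : specNorm W ^ 2 * ((v - a) ⬝ᵥ (v - a)) ≤ (v - a) ⬝ᵥ (v - a) :=
        mul_le_of_le_one_left hnn hs2
      have hexp : (v - a) ⬝ᵥ (v - a) = v ⬝ᵥ v - v ⬝ᵥ a := by
        have hav : a ⬝ᵥ v = v ⬝ᵥ a := dotProduct_comm _ _
        simp only [sub_dotProduct, dotProduct_sub]
        rw [hav, h3]
        ring
      linarith
    rw [hab]
    simp only [add_dotProduct, dotProduct_add]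
    linarith
  intro Y
  rw [ge_iff_le, frob_eq_trace, Matrix.mul_sub, Matrix.trace_sub, heq]
  have h5 : ((C + W)ᵀ * Y).trace ≤ nuclearNorm Y := by
    have h6 := trace_le (C + W) Y
    have h7 : specNorm (C + W) * nuclearNorm Y ≤ 1 * nuclearNorm Y :=
      mul_le_mul_of_nonneg_right hspec (nuclearNorm_nonneg Y)
    rw [one_mul] at h7
    linarith
  linarith
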